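/- arXiv:1812.11743 — 3 statements merged into one kernel-verified Lean document; each statement's English description precedes it below -/
import Mathlib

section
/- Let G be a locally compact unimodular group, K ≤ G a compact open subgroup, and s ∈ G. Then there exists a bijection φ : K → sK and a finite partition of K into clopen sets Q₁, …, Qₙ with elements h₁, …, hₙ ∈ G such that φ(x) = x·hᵢ for all x ∈ Qᵢ. (I.e., sK is obtained from K by a clopen piecewise right translation.) -/
open MeasureTheory

section Aux

variable {G : Type*} [Group G]

private lemma mem_rcoset {S : Set G} {a x : G} :
    x ∈ (fun y => y * a) '' S ↔ x * a⁻¹ ∈ S := by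
  constructor
  · rintro ⟨y, hy, rfl⟩; simpa using hy
  · intro h; exact ⟨x * a⁻¹, h, by group⟩

private lemma rcoset_eq {H : Subgroup G} {a b x : G}
    (ha : x ∈ (fun y => y * a) '' (H : Set G))
    (hb : x ∈ (fun y => y * b) '' (H : Set G)) :
    (fun y => y * a) '' (H : Set G) = (fun y => y * b) '' (H : Set G) := by
  rw [mem_rcoset] at ha hb
  ext y
  rw [mem_rcoset, mem_rcoset]
  constructor
  · intro hy
    have hcalc : y * b⁻¹ = (y * a⁻¹) * ((x * a⁻¹)⁻¹ * (x * b⁻¹)) := by group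
    rw [hcalc]; exact H.mul_mem hy (H.mul_mem (H.inv_mem ha) hb)
  · intro hy
    have hcalc : y * a⁻¹ = (y * b⁻¹) * ((x * b⁻¹)⁻¹ * (x * a⁻¹)) := by group
    rw [hcalc]; exact H.mul_mem hy (H.mul_mem (H.inv_mem hb) ha)

private lemma rcoset_eq_preimage {S : Set G} (a : G) :
    (fun y => y * a) '' S = (fun y => y * a⁻¹) ⁻¹' S := by
  ext x; rw [mem_rcoset]; rfl

private lemma exists_rcoset_decomp [TopologicalSpace G] [IsTopologicalGroup G]
    [MeasurableSpace G] [BorelSpace G]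
    (μ : Measure G) [μ.IsMulRightInvariant]
    (H K : Subgroup G) (hHK : H ≤ K) (hHo : IsOpen (H : Set G))
    (hKc : IsCompact (K : Set G)) :
    ∃ (n : ℕ) (r : Fin n → G), (∀ i, r i ∈ K) ∧
      (∀ x ∈ (K : Set G), ∃! i, x ∈ (fun y => y * r i) '' (H : Set G)) ∧
      μ (K : Set G) = n * μ (H : Set G) := by
  classical
  have hopen : ∀ a : G, IsOpen ((fun y => y * a) '' (H : Set G)) := fun a => by
    rw [rcoset_eq_preimage]
    exact hHo.preimage (continuous_mul_right a⁻¹)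
  have hcover : (K : Set G) ⊆ ⋃ x : K, (fun y => y * (x : G)) '' (H : Set G) := by
    intro x hx
    exact Set.mem_iUnion.2 ⟨⟨x, hx⟩, ⟨1, H.one_mem, by simp⟩⟩
  obtain ⟨t, ht⟩ := hKc.elim_finite_subcover
    (fun x : K => (fun y => y * (x : G)) '' (H : Set G)) (fun x => hopen _) hcover
  set T : Finset (Set G) := t.image (fun x : K => (fun y => y * (x : G)) '' (H : Set G))
    with hT
  have hrep : ∀ S ∈ T, ∃ a : G, a ∈ K ∧ S = (fun y => y * a) '' (H : Set G) := by
    intro S hS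
    simp only [hT, Finset.mem_image] at hS
    obtain ⟨x, _, rfl⟩ := hS
    exact ⟨(x : G), x.2, rfl⟩
  choose a ha1 ha2 using hrep
  set n := T.card with hn
  set e : Fin n ≃ {S // S ∈ T} := T.equivFin.symm with he
  set r : Fin n → G := fun i => a (e i : Set G) (e i).2 with hr
  have hrK : ∀ i, r i ∈ K := fun i => ha1 _ (e i).2
  have hcoset : ∀ i : Fin n, ((e i : Set G)) = (fun y => y * r i) '' (H : Set G) :=
    fun i => ha2 _ (e i).2
  have hexu : ∀ x ∈ (K : Set G), ∃! i, x ∈ (fun y => y * r i) '' (H : Set G) := by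
    intro x hx
    have hx' := ht hx
    rw [Set.mem_iUnion₂] at hx'
    obtain ⟨z, hzt, hxz⟩ := hx'
    have hST : (fun y => y * (z : G)) '' (H : Set G) ∈ T := by
      simp only [hT, Finset.mem_image]; exact ⟨z, hzt, rfl⟩
    refine ⟨e.symm ⟨_, hST⟩, ?_, ?_⟩
    · show x ∈ (fun y => y * r (e.symm ⟨_, hST⟩)) '' (H : Set G)
      rw [← hcoset, e.apply_symm_apply]
      exact hxz
    · intro j hj
      have h1 : (fun y => y * r j) '' (H : Set G) = (fun y => y * (z : G)) '' (H : Set G) :=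
        rcoset_eq hj hxz
      apply e.injective
      apply Subtype.ext
      rw [e.apply_symm_apply, hcoset j]
      exact h1
  have hsubK : ∀ i, (fun y => y * r i) '' (H : Set G) ⊆ (K : Set G) := by
    rintro i _ ⟨y, hy, rfl⟩
    exact K.mul_mem (hHK hy) (hrK i)
  have hKeq : (K : Set G) = ⋃ i, (fun y => y * r i) '' (H : Set G) := by
    apply Set.Subset.antisymm
    · intro x hx
      obtain ⟨i, hi, -⟩ := hexu x hx
      exact Set.mem_iUnion.2 ⟨i, hi⟩
    · exact Set.iUnion_subset hsubK
  have hdisj : Pairwise (Function.onFun Disjoint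
      fun i => (fun y => y * r i) '' (H : Set G)) := by
    intro i j hij
    rw [Function.onFun, Set.disjoint_left]
    intro x hxi hxj
    apply hij
    apply e.injective
    apply Subtype.ext
    rw [hcoset i, hcoset j]
    exact rcoset_eq hxi hxj
  have hmeas : μ (K : Set G) = ∑' i : Fin n, μ ((fun y => y * r i) '' (H : Set G)) := by
    rw [hKeq]
    exact measure_iUnion hdisj fun i => (hopen (r i)).measurableSet
  have hμcoset : ∀ i : Fin n, μ ((fun y => y * r i) '' (H : Set G)) = μ (H : Set G) := by
    intro i
    rw [rcoset_eq_preimage]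
    exact measure_preimage_mul_right μ (r i)⁻¹ _
  refine ⟨n, r, hrK, hexu, ?_⟩
  rw [hmeas]
  simp only [hμcoset]
  rw [tsum_fintype]
  simp [Finset.sum_const, nsmul_eq_mul]

end Aux

/-- In a unimodular locally compact group with compact open subgroup `K`, the coset
`sK` is the image of `K` under a clopen piecewise right translation. -/
theorem coset_clopen_piecewise_translation {G : Type*} [Group G] [TopologicalSpace G]
    [IsTopologicalGroup G] [LocallyCompactSpace G] [T2Space G]
    [MeasurableSpace G] [BorelSpace G]
    (μ : Measure G) [μ.IsHaarMeasure] [μ.IsMulRightInvariant]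
    (K : Subgroup G) (hKc : IsCompact (K : Set G)) (hKo : IsOpen (K : Set G))
    (s : G) :
    ∃ (φ : G → G) (n : ℕ) (Q : Fin n → Set G) (h : Fin n → G),
      (∀ i, IsClopen (Q i)) ∧ (∀ i, Q i ⊆ (K : Set G)) ∧
      (∀ x ∈ (K : Set G), ∃! i, x ∈ Q i) ∧
      (∀ i, ∀ x ∈ Q i, φ x = x * h i) ∧
      Set.BijOn φ (K : Set G) ((fun x => s * x) '' (K : Set G)) := by
  classical
  set H1 : Subgroup G := K ⊓ K.comap (MulAut.conj s).toMonoidHom with hH1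
  set H2 : Subgroup G := K ⊓ K.comap (MulAut.conj s⁻¹).toMonoidHom with hH2
  have hmem1 : ∀ x : G, x ∈ H1 ↔ x ∈ K ∧ s * x * s⁻¹ ∈ K := by
    intro x
    simp [hH1, Subgroup.mem_inf, Subgroup.mem_comap]
  have hmem2 : ∀ x : G, x ∈ H2 ↔ x ∈ K ∧ s⁻¹ * x * s ∈ K := by
    intro x
    simp [hH2, Subgroup.mem_inf, Subgroup.mem_comap]
  have hKcl : IsClosed (K : Set G) := hKc.isClosed
  have hcont1 : Continuous fun x : G => s * x * s⁻¹ := by fun_prop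
  have hcont2 : Continuous fun x : G => s⁻¹ * x * s := by fun_prop
  have hset1 : (H1 : Set G) = (K : Set G) ∩ (fun x => s * x * s⁻¹) ⁻¹' (K : Set G) := by
    ext x; simpa using hmem1 x
  have hset2 : (H2 : Set G) = (K : Set G) ∩ (fun x => s⁻¹ * x * s) ⁻¹' (K : Set G) := by
    ext x
    have := hmem2 x
    simp only [Set.mem_inter_iff, Set.mem_preimage, SetLike.mem_coe]
    exact this
  have hH1o : IsOpen (H1 : Set G) := by
    rw [hset1]; exact hKo.inter (hKo.preimage hcont1)
  have hH2o : IsOpen (H2 : Set G) := by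
    rw [hset2]; exact hKo.inter (hKo.preimage hcont2)
  have hH1cl : IsClosed (H1 : Set G) := by
    rw [hset1]; exact hKcl.inter (hKcl.preimage hcont1)
  have hH2cl : IsClosed (H2 : Set G) := by
    rw [hset2]; exact hKcl.inter (hKcl.preimage hcont2)
  have hH1K : H1 ≤ K := inf_le_left
  have hH2K : H2 ≤ K := inf_le_left
  have hH1c : IsCompact (H1 : Set G) :=
    IsCompact.of_isClosed_subset hKc hH1cl hH1K
  -- conjugation relation
  have hconj : ∀ x : G, x ∈ H1 ↔ s * x * s⁻¹ ∈ H2 := by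
    intro x
    rw [hmem1, hmem2]
    constructor
    · rintro ⟨h1, h2⟩
      refine ⟨h2, ?_⟩
      have : s⁻¹ * (s * x * s⁻¹) * s = x := by group
      rw [this]; exact h1
    · rintro ⟨h1, h2⟩
      have : s⁻¹ * (s * x * s⁻¹) * s = x := by group
      rw [this] at h2
      exact ⟨h2, h1⟩
  -- measures of H1 and H2 agree
  have hμeq : μ (H2 : Set G) = μ (H1 : Set G) := by
    have hseteq : (H2 : Set G) = (fun x => x * s) ⁻¹' ((fun x => s⁻¹ * x) ⁻¹' (H1 : Set G)) := by
      ext x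
      simp only [Set.mem_preimage, SetLike.mem_coe]
      rw [hconj (s⁻¹ * (x * s))]
      have : s * (s⁻¹ * (x * s)) * s⁻¹ = x := by group
      rw [this]
    rw [hseteq, measure_preimage_mul_right, measure_preimage_mul]
  obtain ⟨n₁, r, hrK, hru, hμ1⟩ := exists_rcoset_decomp μ H1 K hH1K hH1o hKc
  obtain ⟨n₂, u, huK, huu, hμ2⟩ := exists_rcoset_decomp μ H2 K hH2K hH2o hKc
  have hc0 : μ (H1 : Set G) ≠ 0 :=
    (hH1o.measure_pos μ ⟨1, H1.one_mem⟩).ne'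
  have hctop : μ (H1 : Set G) ≠ ⊤ := hH1c.measure_lt_top.ne
  have hn : n₂ = n₁ := by
    have hmm : (n₂ : ENNReal) * μ (H1 : Set G) = (n₁ : ENNReal) * μ (H1 : Set G) :=
      calc (n₂ : ENNReal) * μ (H1 : Set G) = (n₂ : ENNReal) * μ (H2 : Set G) := by
            rw [hμeq]
        _ = μ (K : Set G) := hμ2.symm
        _ = (n₁ : ENNReal) * μ (H1 : Set G) := hμ1
    exact_mod_cast (ENNReal.mul_left_inj hc0 hctop).1 hmm
  subst hn
  -- construction
  set Q : Fin n₂ → Set G := fun i => (fun y => y * u i) '' (H2 : Set G) with hQ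
  set h : Fin n₂ → G := fun i => (u i)⁻¹ * (s * r i) with hh
  have hQK : ∀ i, Q i ⊆ (K : Set G) := by
    rintro i _ ⟨y, hy, rfl⟩
    exact K.mul_mem (hH2K hy) (huK i)
  set φ : G → G := fun x =>
    if hx : x ∈ (K : Set G) then x * h (huu x hx).choose else x with hφ
  have φspec : ∀ i, ∀ x ∈ Q i, φ x = x * h i := by
    intro i x hxQ
    have hxK : x ∈ (K : Set G) := hQK i hxQ
    have : (huu x hxK).choose = i := ((huu x hxK).choose_spec.2 i hxQ).symm
    rw [hφ]
    simp only [dif_pos hxK, this]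
  -- key: for x ∈ Q i, φ x = s * (v * r i) with v ∈ H1
  have hkey : ∀ i, ∀ x ∈ Q i,
      ∃ v ∈ H1, φ x = s * (v * r i) := by
    intro i x hxQ
    have hw : x * (u i)⁻¹ ∈ H2 := mem_rcoset.1 hxQ
    set v : G := s⁻¹ * (x * (u i)⁻¹) * s with hv
    have hvH1 : v ∈ H1 := by
      rw [hconj v]
      have : s * v * s⁻¹ = x * (u i)⁻¹ := by rw [hv]; group
      rw [this]; exact hw
    refine ⟨v, hvH1, ?_⟩
    rw [φspec i x hxQ, hh, hv]
    group
  refine ⟨φ, n₂, Q, h, ?_, hQK, huu, φspec, ?_, ?_, ?_⟩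
  · intro i
    have : Q i = (fun y => y * (u i)⁻¹) ⁻¹' (H2 : Set G) := rcoset_eq_preimage (u i)
    rw [this]
    exact ⟨hH2cl.preimage (continuous_mul_right _),
      hH2o.preimage (continuous_mul_right _)⟩
  -- MapsTo
  · intro x hx
    obtain ⟨i, hi, -⟩ := huu x hx
    obtain ⟨v, hvH1, hφx⟩ := hkey i x hi
    exact ⟨v * r i, K.mul_mem (hH1K hvH1) (hrK i), hφx.symm⟩
  -- InjOn
  · intro x hx y hy hxy
    obtain ⟨i, hi, -⟩ := huu x hx
    obtain ⟨j, hj, -⟩ := huu y hy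
    obtain ⟨v, hvH1, hφx⟩ := hkey i x hi
    obtain ⟨w, hwH1, hφy⟩ := hkey j y hj
    have hz : v * r i = w * r j := by
      have := hφx.symm.trans (hxy.trans hφy)
      exact mul_left_cancel this
    have hziK : v * r i ∈ (K : Set G) := K.mul_mem (hH1K hvH1) (hrK i)
    have hzi : v * r i ∈ (fun y => y * r i) '' (H1 : Set G) :=
      ⟨v, hvH1, rfl⟩
    have hzj : v * r i ∈ (fun y => y * r j) '' (H1 : Set G) := by
      rw [hz]; exact ⟨w, hwH1, rfl⟩
    obtain ⟨i', -, hi'u⟩ := hru (v * r i) hziK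
    have hij : i = j := (hi'u i hzi).trans (hi'u j hzj).symm
    subst hij
    have : x * h i = y * h i := by
      rw [← φspec i x hi, ← φspec i y hj, hxy]
    exact mul_right_cancel this
  -- SurjOn
  · rintro _ ⟨k, hk, rfl⟩
    obtain ⟨i, hi, -⟩ := hru k hk
    have hv : k * (r i)⁻¹ ∈ H1 := mem_rcoset.1 hi
    set w : G := s * (k * (r i)⁻¹) * s⁻¹ with hw
    have hwH2 : w ∈ H2 := (hconj _).1 hv
    set x : G := w * u i with hx
    have hxQ : x ∈ Q i := ⟨w, hwH2, rfl⟩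
    refine ⟨x, hQK i hxQ, ?_⟩
    rw [φspec i x hxQ, hx, hw, hh]
    group
end

section
/- Let G be a locally compact group and H ≤ G an open subgroup. If there exists a clopen piecewise-translation φ of H generating a free ℤ-action on H with a measurable fundamental domain, then there exists a clopen piecewise-translation ψ of G generating a free ℤ-action on G with a measurable fundamental domain. Explicitly, choosing a section r : G/H → G of the projection, ψ(g) = r(gH)·φ(r(gH)⁻¹g) works. -/
section Aux
variable {G : Type*} [Group G] (H : Subgroup G) (r : G ⧸ H → G)
  (hr : ∀ q : G ⧸ H, ((r q : G) : G ⧸ H) = q)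

include hr in
lemma mem_aux (x : G) : (r ((x : G) : G ⧸ H))⁻¹ * x ∈ H :=
  (QuotientGroup.eq).mp (hr _)

include hr in
def cmap (x : G) : H := ⟨(r ((x : G) : G ⧸ H))⁻¹ * x, mem_aux H r hr x⟩

include hr in
lemma mk_sec_mul (q : G ⧸ H) (h : H) : ((r q * h : G) : G ⧸ H) = q := by
  rw [QuotientGroup.mk_mul_of_mem _ h.2, hr]

lemma cmap_sec_mul (q : G ⧸ H) (h : H) : cmap H r hr (r q * h) = h := by
  apply Subtype.ext
  simp [cmap, mk_sec_mul H r hr q h]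

lemma sec_mul_cmap (x : G) : r ((x : G) : G ⧸ H) * (cmap H r hr x : G) = x := by
  simp [cmap]

variable (φ : Equiv.Perm H)

include hr in
def psiFun (x : G) : G := r ((x : G) : G ⧸ H) * (φ (cmap H r hr x) : G)

include hr in
lemma psiFun_sec_mul (q : G ⧸ H) (h : H) :
    psiFun H r hr φ (r q * h) = r q * (φ h : G) := by
  unfold psiFun
  rw [mk_sec_mul H r hr q h, cmap_sec_mul H r hr q h]

include hr in
lemma psiFun_comp (φ' : Equiv.Perm H) (x : G) :
    psiFun H r hr φ (psiFun H r hr φ' x) =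
      r ((x : G) : G ⧸ H) * ((φ (φ' (cmap H r hr x))) : G) := by
  conv_lhs => rw [show psiFun H r hr φ' x = r ((x : G) : G ⧸ H) * (φ' (cmap H r hr x) : G) from rfl]
  rw [psiFun_sec_mul]

def psi : Equiv.Perm G where
  toFun := psiFun H r hr φ
  invFun := psiFun H r hr φ.symm
  left_inv x := by
    rw [psiFun_comp]
    simp [sec_mul_cmap H r hr x]
  right_inv x := by
    rw [psiFun_comp]
    simp [sec_mul_cmap H r hr x]

lemma psi_apply (x : G) : psi H r hr φ x = psiFun H r hr φ x := rfl

lemma psi_inv_apply (x : G) : (psi H r hr φ)⁻¹ x = psiFun H r hr φ.symm x := rfl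

include hr in
lemma psi_zpow (n : ℤ) (x : G) :
    ((psi H r hr φ) ^ n) x = r ((x : G) : G ⧸ H) * (((φ ^ n) (cmap H r hr x)) : G) := by
  induction n using Int.induction_on with
  | zero => simpa using (sec_mul_cmap H r hr x).symm
  | succ n ih =>
      have h1 : ((psi H r hr φ) ^ ((n : ℤ) + 1)) x
          = psi H r hr φ (((psi H r hr φ) ^ (n : ℤ)) x) := by
        rw [add_comm, zpow_add, zpow_one, Equiv.Perm.mul_apply]
      rw [h1, ih, psi_apply, psiFun_sec_mul]
      congr 1
      rw [add_comm, zpow_add, zpow_one, Equiv.Perm.mul_apply]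
  | pred n ih =>
      have h1 : ((psi H r hr φ) ^ (-(n : ℤ) - 1)) x
          = (psi H r hr φ)⁻¹ (((psi H r hr φ) ^ (-(n : ℤ))) x) := by
        rw [show -(n : ℤ) - 1 = (-1) + (-(n : ℤ)) by ring, zpow_add, zpow_neg_one,
          Equiv.Perm.mul_apply]
      rw [h1, ih, psi_inv_apply, psiFun_sec_mul]
      congr 1
      rw [show -(n : ℤ) - 1 = (-1) + (-(n : ℤ)) by ring, zpow_add, zpow_neg_one,
        Equiv.Perm.mul_apply]
      rfl

include hr in
lemma mem_psi_zpow_image (n : ℤ) (x : G) (S : Set H) :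
    x ∈ ⇑((psi H r hr φ) ^ n) '' (cmap H r hr ⁻¹' S) ↔ cmap H r hr x ∈ ⇑(φ ^ n) '' S := by
  constructor
  · rintro ⟨y, hy, rfl⟩
    refine ⟨cmap H r hr y, hy, ?_⟩
    rw [psi_zpow, cmap_sec_mul]
  · rintro ⟨d, hd, hdx⟩
    refine ⟨r ((x : G) : G ⧸ H) * d, ?_, ?_⟩
    · rw [Set.mem_preimage, cmap_sec_mul]; exact hd
    · rw [psi_zpow]
      have hq : (((r ((x : G) : G ⧸ H) * d : G)) : G ⧸ H) = ((x : G) : G ⧸ H) :=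
        mk_sec_mul H r hr _ d
      rw [hq, cmap_sec_mul, hdx, sec_mul_cmap]
end Aux

def IsClopenPiecewiseTranslation {G : Type*} [Group G] [TopologicalSpace G]
    (α : G → G) : Prop :=
  ∃ (n : ℕ) (P : Fin n → Set G) (g : Fin n → G),
    (∀ i, IsClopen (P i)) ∧ (∀ x : G, ∃! i, x ∈ P i) ∧
    ∀ i, ∀ x ∈ P i, α x = x * g i

/-- A clopen translation-like action of ℤ on an open subgroup `H` extends, via a
section `r : G/H → G`, to a clopen translation-like action of ℤ on `G`. -/
theorem extend_clopen_TL_action {G : Type*} [Group G] [TopologicalSpace G]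
    [IsTopologicalGroup G] [LocallyCompactSpace G] [T2Space G]
    [MeasurableSpace G] [BorelSpace G]
    (H : Subgroup G) (hHo : IsOpen (H : Set G))
    (φ : Equiv.Perm H)
    (hφ : ∃ (n : ℕ) (P : Fin n → Set H) (g : Fin n → H),
      (∀ i, IsClopen (P i)) ∧ (∀ x : H, ∃! i, x ∈ P i) ∧
      ∀ i, ∀ x ∈ P i, φ x = x * g i)
    (hfree : ∀ n : ℤ, n ≠ 0 → ∀ x : H, (φ ^ n) x ≠ x)
    (D : Set H) (hD : MeasurableSet D)
    (hfund : ∀ x : H, ∃! n : ℤ, x ∈ ⇑(φ ^ n) '' D)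
    (r : G ⧸ H → G) (hr : ∀ q : G ⧸ H, ((r q : G) : G ⧸ H) = q) :
    ∃ ψ : Equiv.Perm G,
      (∀ (x : G) (hx : (r ((x : G) : G ⧸ H))⁻¹ * x ∈ H),
        ψ x = r ((x : G) : G ⧸ H) * (φ ⟨(r ((x : G) : G ⧸ H))⁻¹ * x, hx⟩ : G)) ∧
      IsClopenPiecewiseTranslation (ψ : G → G) ∧
      (∀ n : ℤ, n ≠ 0 → ∀ x : G, (ψ ^ n) x ≠ x) ∧
      ∃ E : Set G, MeasurableSet E ∧ ∀ x : G, ∃! n : ℤ, x ∈ ⇑(ψ ^ n) '' E := by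
  haveI : DiscreteTopology (G ⧸ H) := QuotientGroup.discreteTopology hHo
  have cont_sec : Continuous (fun x : G => r ((x : G) : G ⧸ H)) :=
    (continuous_of_discreteTopology).comp continuous_quotient_mk'
  have cont_f : Continuous (fun x : G => (r ((x : G) : G ⧸ H))⁻¹ * x) :=
    (cont_sec.inv).mul continuous_id
  have cont_c : Continuous (cmap H r hr) := by
    apply Continuous.subtype_mk cont_f
  have meas_c : Measurable (cmap H r hr) :=
    Measurable.subtype_mk cont_f.measurable
  obtain ⟨n, P, g, hPc, hPu, hPt⟩ := hφ
  refine ⟨psi H r hr φ, ?_, ?_, ?_, ?_⟩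
  · intro x hx; rfl
  · refine ⟨n, fun i => cmap H r hr ⁻¹' (P i), fun i => (g i : G),
      fun i => (hPc i).preimage cont_c, ?_, ?_⟩
    · intro x
      obtain ⟨i, hi, hu⟩ := hPu (cmap H r hr x)
      exact ⟨i, hi, fun j hj => hu j hj⟩
    · intro i x hx
      rw [psi_apply]
      unfold psiFun
      rw [hPt i _ hx]
      push_cast
      rw [← mul_assoc, sec_mul_cmap]
  · intro m hm x h
    rw [psi_zpow] at h
    apply hfree m hm (cmap H r hr x)
    apply Subtype.ext
    apply mul_left_cancel (a := r ((x : G) : G ⧸ H))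
    rw [h, sec_mul_cmap]
  · refine ⟨cmap H r hr ⁻¹' D, hD.preimage meas_c, fun x => ?_⟩
    obtain ⟨m, hm, hu⟩ := hfund (cmap H r hr x)
    exact ⟨m, (mem_psi_zpow_image H r hr φ m x D).mpr hm,
      fun k hk => hu k ((mem_psi_zpow_image H r hr φ k x D).mp hk)⟩
end

section
/- Let G be a locally compact group that is locally elliptic (every compact subset of G is contained in a compact subgroup). Then G admits no Borel piecewise-translation generating a free ℤ-action with a measurable fundamental domain. Concretely: if φ is such a Borel piecewise-translation with translation parts in a finite set F, then any compact subgroup H containing F is φ-invariant, and φ restricted to H would give such an action on the compact group H, a contradiction. -/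
open MeasureTheory
open scoped ENNReal NNReal

lemma haar_isMulRightInvariant_of_compact {H : Type*} [Group H] [TopologicalSpace H]
    [IsTopologicalGroup H] [CompactSpace H] [T2Space H] [MeasurableSpace H] [BorelSpace H] :
    (Measure.haar : Measure H).IsMulRightInvariant := by
  constructor
  intro g
  set μ : Measure H := Measure.haar with hμ
  haveI : IsFiniteMeasure μ := CompactSpace.isFiniteMeasure
  have hle : Measure.map (· * g) μ
      = (Measure.map (· * g) μ).haarScalarFactor μ • μ :=
    Measure.isMulInvariant_eq_smul_of_compactSpace _ _
  have huniv : Measure.map (· * g) μ Set.univ = μ Set.univ := by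
    rw [Measure.map_apply (measurable_mul_const g) MeasurableSet.univ, Set.preimage_univ]
  have h0 : μ Set.univ ≠ 0 := isOpen_univ.measure_ne_zero μ Set.univ_nonempty
  have ht : μ Set.univ ≠ ⊤ := (isCompact_univ.measure_lt_top).ne
  have hc : ((Measure.map (· * g) μ).haarScalarFactor μ • μ) Set.univ = μ Set.univ := by
    rw [← hle]; exact huniv
  rw [Measure.smul_apply, ENNReal.smul_def, smul_eq_mul] at hc
  nth_rewrite 2 [← one_mul (μ Set.univ)] at hc
  have hc1 : ((Measure.map (· * g) μ).haarScalarFactor μ : ℝ≥0∞) = 1 :=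
    (ENNReal.mul_left_inj h0 ht).mp hc
  rw [hle, ENNReal.coe_eq_one.mp hc1, one_smul]

def IsBorelPiecewiseTranslation {G : Type*} [Group G] [MeasurableSpace G]
    (α : G → G) : Prop :=
  ∃ (n : ℕ) (P : Fin n → Set G) (g : Fin n → G),
    (∀ i, MeasurableSet (P i)) ∧ (∀ x : G, ∃! i, x ∈ P i) ∧
    ∀ i, ∀ x ∈ P i, α x = x * g i

/-- A locally elliptic locally compact group admits no Borel piecewise-translation
generating a free ℤ-action with a Borel fundamental domain. -/
theorem no_TL_action_of_locallyElliptic {G : Type*} [Group G] [TopologicalSpace G]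
    [IsTopologicalGroup G] [LocallyCompactSpace G] [T2Space G]
    [MeasurableSpace G] [BorelSpace G]
    (hell : ∀ C : Set G, IsCompact C →
      ∃ K : Subgroup G, IsCompact (K : Set G) ∧ C ⊆ (K : Set G)) :
    ¬ ∃ φ : Equiv.Perm G, IsBorelPiecewiseTranslation (φ : G → G) ∧
        (∀ n : ℤ, n ≠ 0 → ∀ x : G, (φ ^ n) x ≠ x) ∧
        ∃ D : Set G, MeasurableSet D ∧ ∀ x : G, ∃! n : ℤ, x ∈ ⇑(φ ^ n) '' D := by
  rintro ⟨φ, ⟨n, P, g, hPmeas, hPuniq, hφeq⟩, -, D, hD, hfund⟩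
  obtain ⟨K, hKcomp, hgK⟩ := hell (Set.range g) (Set.finite_range g).isCompact
  have hgmem : ∀ i, g i ∈ K := fun i => hgK ⟨i, rfl⟩
  have hfwd : ∀ x : G, x ∈ K → φ x ∈ K := by
    intro x hx
    obtain ⟨i, hi, -⟩ := hPuniq x
    rw [hφeq i x hi]
    exact K.mul_mem hx (hgmem i)
  have hbwd : ∀ y : G, y ∈ K → φ.symm y ∈ K := by
    intro y hy
    obtain ⟨i, hi, -⟩ := hPuniq (φ.symm y)
    have h1 : y = φ.symm y * g i := by
      conv_lhs => rw [← φ.apply_symm_apply y, hφeq i _ hi]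
    have h2 : φ.symm y = y * (g i)⁻¹ := eq_mul_inv_of_mul_eq h1.symm
    rw [h2]
    exact K.mul_mem hy (K.inv_mem (hgmem i))
  haveI : CompactSpace K := isCompact_iff_compactSpace.mp hKcomp
  haveI : BorelSpace K := Subtype.borelSpace (K : Set G)
  set μ : Measure K := Measure.haar with hμdef
  haveI hri : μ.IsMulRightInvariant := haar_isMulRightInvariant_of_compact
  set ψ : Equiv.Perm K :=
    { toFun := fun k => ⟨φ k, hfwd k k.2⟩
      invFun := fun k => ⟨φ.symm k, hbwd k k.2⟩
      left_inv := fun k => Subtype.ext (φ.symm_apply_apply k)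
      right_inv := fun k => Subtype.ext (φ.apply_symm_apply k) } with hψdef
  set gK : Fin n → K := fun i => ⟨g i, hgmem i⟩ with hgKdef
  set P' : Fin n → Set K := fun i => Subtype.val ⁻¹' P i with hP'def
  have hP'meas : ∀ i, MeasurableSet (P' i) :=
    fun i => (hPmeas i).preimage measurable_subtype_coe
  have hP'uniq : ∀ k : K, ∃! i, k ∈ P' i := fun k => hPuniq (k : G)
  have hψP : ∀ i, ∀ k ∈ P' i, ψ k = k * gK i := fun i k hk => Subtype.ext (hφeq i k hk)
  have hP'disj : Pairwise (Function.onFun Disjoint P') := by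
    intro a b hab
    refine Set.disjoint_left.mpr fun k hka hkb => hab ?_
    obtain ⟨i, -, hu⟩ := hP'uniq k
    exact (hu a hka).trans (hu b hkb).symm
  have hpre : ∀ A : Set K, ψ ⁻¹' A = ⋃ i, P' i ∩ (· * gK i) ⁻¹' A := by
    intro A
    ext k
    simp only [Set.mem_preimage, Set.mem_iUnion, Set.mem_inter_iff]
    constructor
    · intro hk
      obtain ⟨i, hi, -⟩ := hP'uniq k
      exact ⟨i, hi, by rwa [← hψP i k hi]⟩
    · rintro ⟨i, hi, hA⟩
      rwa [hψP i k hi]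
  have hψmeas : Measurable ψ := by
    intro A hA
    rw [hpre]
    exact MeasurableSet.iUnion fun i =>
      (hP'meas i).inter (hA.preimage (measurable_mul_const (gK i)))
  have hrimg : ∀ (i : Fin n) (S : Set K), (· * gK i) '' S = (· * (gK i)⁻¹) ⁻¹' S := by
    intro i S
    ext y
    constructor
    · rintro ⟨k, hk, rfl⟩
      simpa using hk
    · intro hy
      exact ⟨y * (gK i)⁻¹, hy, by group⟩
  have hQpsi : ∀ i, ψ '' P' i = (· * gK i) '' P' i :=
    fun i => Set.image_congr fun k hk => hψP i k hk
  have hQmeas : ∀ i, MeasurableSet (ψ '' P' i) := fun i => by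
    rw [hQpsi, hrimg]; exact (hP'meas i).preimage (measurable_mul_const _)
  have hQdisj : Pairwise (Function.onFun Disjoint (fun i => ψ '' P' i)) :=
    fun a b hab => Set.disjoint_image_of_injective ψ.injective (hP'disj hab)
  have hQuniv : ⋃ i, ψ '' P' i = Set.univ := by
    rw [← Set.image_iUnion]
    have : ⋃ i, P' i = Set.univ := by
      ext k
      simp only [Set.mem_iUnion, Set.mem_univ, iff_true]
      obtain ⟨i, hi, -⟩ := hP'uniq k
      exact ⟨i, hi⟩
    rw [this, Set.image_univ, ψ.surjective.range_eq]
  have himgS : ∀ S : Set K, ψ '' S = ⋃ i, (· * gK i) '' (S ∩ P' i) := by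
    intro S
    ext y
    simp only [Set.mem_image, Set.mem_iUnion, Set.mem_inter_iff]
    constructor
    · rintro ⟨k, hk, rfl⟩
      obtain ⟨i, hi, -⟩ := hP'uniq k
      exact ⟨i, k, ⟨hk, hi⟩, by rw [← hψP i k hi]⟩
    · rintro ⟨i, k, ⟨hk, hi⟩, rfl⟩
      exact ⟨k, hk, hψP i k hi⟩
  have hψsymm_meas : Measurable ⇑ψ.symm := by
    intro A hA
    have h : ⇑ψ.symm ⁻¹' A = ψ '' A := (ψ.image_eq_preimage_symm A).symm
    rw [h, himgS]
    exact MeasurableSet.iUnion fun i => by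
      rw [hrimg]
      exact (hA.inter (hP'meas i)).preimage (measurable_mul_const _)
  -- measure preservation of ψ
  have hmp : MeasurePreserving ψ μ μ := by
    refine ⟨hψmeas, ?_⟩
    ext s hs
    rw [Measure.map_apply hψmeas hs]
    have hterm : ∀ i, P' i ∩ (· * gK i) ⁻¹' s
        = (· * gK i) ⁻¹' (ψ '' P' i ∩ s) := by
      intro i
      rw [hQpsi, Set.preimage_inter,
        Set.preimage_image_eq _ (mul_left_injective (gK i))]
    have hdisj1 : Pairwise (Function.onFun Disjoint (fun i => P' i ∩ (· * gK i) ⁻¹' s)) :=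
      fun a b hab => ((hP'disj hab).mono Set.inter_subset_left Set.inter_subset_left)
    have hmeas1 : ∀ i, MeasurableSet (P' i ∩ (· * gK i) ⁻¹' s) :=
      fun i => (hP'meas i).inter (hs.preimage (measurable_mul_const _))
    rw [hpre, measure_iUnion hdisj1 hmeas1]
    have h1 : ∀ i, μ (P' i ∩ (· * gK i) ⁻¹' s) = μ (ψ '' P' i ∩ s) := by
      intro i
      rw [hterm i, measure_preimage_mul_right μ (gK i)]
    have hdisj2 : Pairwise (Function.onFun Disjoint (fun i => ψ '' P' i ∩ s)) :=
      fun a b hab => ((hQdisj hab).mono Set.inter_subset_left Set.inter_subset_left)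
    have hmeas2 : ∀ i, MeasurableSet (ψ '' P' i ∩ s) := fun i => (hQmeas i).inter hs
    have hcov : s = ⋃ i, ψ '' P' i ∩ s := by
      rw [← Set.iUnion_inter, hQuniv, Set.univ_inter]
    calc ∑' i, μ (P' i ∩ (· * gK i) ⁻¹' s) = ∑' i, μ (ψ '' P' i ∩ s) := by
          exact tsum_congr h1
      _ = μ (⋃ i, ψ '' P' i ∩ s) := (measure_iUnion hdisj2 hmeas2).symm
      _ = μ s := by rw [← hcov]
  set e : K ≃ᵐ K := ⟨ψ, hψmeas, hψsymm_meas⟩ with hedef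
  have hmpe : MeasurePreserving e μ μ := hmp
  have hmps : MeasurePreserving ⇑ψ.symm μ μ := MeasurePreserving.symm e hmpe
  -- measure preservation of all integer powers
  have hzmp : ∀ m : ℤ, MeasurePreserving ⇑(ψ ^ m) μ μ := by
    intro m
    rcases m with k | k
    · rw [Int.ofNat_eq_coe, zpow_natCast, Equiv.Perm.coe_pow]
      exact hmp.iterate k
    · rw [zpow_negSucc]
      have hcoe : ⇑(ψ ^ (k + 1))⁻¹ = (⇑ψ.symm)^[k + 1] := by
        rw [← inv_pow, Equiv.Perm.coe_pow]
        rfl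
      rw [hcoe]
      exact hmps.iterate (k + 1)
  -- coercion compatibility of powers
  have hncoe : ∀ (j : ℕ) (k : K), ((ψ ^ j) k : G) = (φ ^ j) (k : G) := by
    intro j
    induction j with
    | zero => intro k; simp
    | succ j ih =>
      intro k
      rw [pow_succ, pow_succ, Equiv.Perm.mul_apply, Equiv.Perm.mul_apply, ih (ψ k)]
      rfl
  have hzcoe : ∀ (m : ℤ) (k : K), ((ψ ^ m) k : G) = (φ ^ m) (k : G) := by
    intro m k
    rcases m with j | j
    · rw [Int.ofNat_eq_coe, zpow_natCast, zpow_natCast]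
      exact hncoe j k
    · rw [zpow_negSucc, zpow_negSucc]
      apply (φ ^ (j + 1)).injective
      rw [← Equiv.Perm.mul_apply (φ ^ (j + 1)), mul_inv_cancel, Equiv.Perm.one_apply]
      rw [← hncoe (j + 1) ((ψ ^ (j + 1))⁻¹ k), ← Equiv.Perm.mul_apply (ψ ^ (j + 1)), mul_inv_cancel,
        Equiv.Perm.one_apply]
  -- the fundamental domain inside K
  set D' : Set K := Subtype.val ⁻¹' D with hD'def
  have hD'meas : MeasurableSet D' := hD.preimage measurable_subtype_coe
  have hiff : ∀ (m : ℤ) (k : K), k ∈ ⇑(ψ ^ m) '' D' ↔ (k : G) ∈ ⇑(φ ^ m) '' D := by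
    intro m k
    constructor
    · rintro ⟨d, hd, rfl⟩
      exact ⟨d, hd, (hzcoe m d).symm⟩
    · rintro ⟨x, hx, hxk⟩
      refine ⟨(ψ ^ (-m)) k, ?_, ?_⟩
      · show ((ψ ^ (-m)) k : G) ∈ D
        rw [hzcoe]
        have hx' : (φ ^ (-m)) (k : G) = x := by
          rw [← hxk, ← Equiv.Perm.mul_apply, ← zpow_add, neg_add_cancel, zpow_zero,
            Equiv.Perm.coe_one, id_eq]
        rwa [hx']
      · rw [← Equiv.Perm.mul_apply, ← zpow_add, add_neg_cancel, zpow_zero,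
          Equiv.Perm.coe_one, id_eq]
  have hcover : ∀ k : K, ∃! m : ℤ, k ∈ ⇑(ψ ^ m) '' D' := by
    intro k
    obtain ⟨m, hm, hun⟩ := hfund (k : G)
    exact ⟨m, (hiff m k).mpr hm, fun m' hm' => hun m' ((hiff m' k).mp hm')⟩
  have hSm_eq : ∀ m : ℤ, ⇑(ψ ^ m) '' D' = ⇑(ψ ^ (-m)) ⁻¹' D' := by
    intro m
    ext k
    rw [Set.mem_preimage]
    constructor
    · rintro ⟨d, hd, rfl⟩
      rwa [← Equiv.Perm.mul_apply, ← zpow_add, neg_add_cancel, zpow_zero,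
        Equiv.Perm.coe_one, id_eq]
    · intro h
      exact ⟨_, h, by rw [← Equiv.Perm.mul_apply, ← zpow_add, add_neg_cancel, zpow_zero,
        Equiv.Perm.coe_one, id_eq]⟩
  have hSmeas : ∀ m : ℤ, MeasurableSet (⇑(ψ ^ m) '' D') := fun m => by
    rw [hSm_eq]; exact hD'meas.preimage (hzmp (-m)).measurable
  have hSμ : ∀ m : ℤ, μ (⇑(ψ ^ m) '' D') = μ D' := fun m => by
    rw [hSm_eq]; exact (hzmp (-m)).measure_preimage hD'meas.nullMeasurableSet
  have hSdisj : Pairwise (Function.onFun Disjoint (fun m : ℤ => ⇑(ψ ^ m) '' D')) := by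
    intro a b hab
    refine Set.disjoint_left.mpr fun k hka hkb => hab ?_
    obtain ⟨m, -, hu⟩ := hcover k
    exact (hu a hka).trans (hu b hkb).symm
  have hSuniv : ⋃ m : ℤ, ⇑(ψ ^ m) '' D' = Set.univ := by
    ext k
    simp only [Set.mem_iUnion, Set.mem_univ, iff_true]
    obtain ⟨m, hm, -⟩ := hcover k
    exact ⟨m, hm⟩
  have hμuniv : μ Set.univ = ∑' m : ℤ, μ D' := by
    rw [← hSuniv, measure_iUnion hSdisj hSmeas]
    exact tsum_congr hSμ
  have h0 : μ Set.univ ≠ 0 := isOpen_univ.measure_ne_zero μ Set.univ_nonempty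
  have ht : μ Set.univ ≠ ⊤ := (isCompact_univ.measure_lt_top).ne
  rcases eq_or_ne (μ D') 0 with hz | hz
  · rw [hz, tsum_zero] at hμuniv
    exact h0 hμuniv
  · rw [ENNReal.tsum_const_eq_top_of_ne_zero hz] at hμuniv
    exact ht hμuniv
end
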